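/- Reparametrization theorem, estimate at the averaged point: There exists a constant c₀ > 0, depending only on m, n, Q, r − s and r/s, such that whenever hypothesis (H) holds and N : Σ → 𝒜_Q(ℝ^{m+n}) is the well-defined map N(p) := ∑_{v ∈ κ_p, |v| < c₀} M(p+v)⟦v⟧, the following holds: if x ∈ B_s and (x, η(f(x))) = p + v for some p ∈ Σ and v ∈ κ_p, then 𝒢(N(p), Q⟦v⟧) ≤ 2√Q · 𝒢(f(x), Q⟦η(f(x))⟧). -/

import Mathlib

open scoped BigOperators
open Metric MeasureTheory Asymptotics
open scoped Classical

noncomputable section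

/-- `Euc n` is the Euclidean space `ℝⁿ`. -/
abbrev Euc (n : ℕ) : Type := EuclideanSpace ℝ (Fin n)

/-- Two `Q`-tuples of points are identified when they differ by a permutation of the indices. -/
def QPerm (α : Type*) (Q : ℕ) : Setoid (Fin Q → α) where
  r f g := ∃ σ : Equiv.Perm (Fin Q), f = g ∘ σ
  iseqv := by
    refine ⟨fun f => ⟨Equiv.refl _, rfl⟩, ?_, ?_⟩
    · rintro f g ⟨σ, rfl⟩
      exact ⟨σ.symm, by ext i; simp⟩
    · rintro f g h ⟨σ, rfl⟩ ⟨ρ, rfl⟩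
      exact ⟨σ.trans ρ, by ext i; simp⟩

/-- The space `𝒜_Q(α)` of `Q`-points of `α`: unordered `Q`-tuples of points of `α`. -/
abbrev AQ (α : Type*) (Q : ℕ) : Type _ := Quotient (QPerm α Q)

/-- The `Q`-point `∑_l ⟦f l⟧`. -/
def AQmk {α : Type*} {Q : ℕ} (f : Fin Q → α) : AQ α Q := Quotient.mk (QPerm α Q) f

/-- `𝒢` computed on representatives: `min_{σ ∈ 𝒫_Q} (∑_l ‖v_l - w_{σ(l)}‖²)^{1/2}`. -/
def Gfun {α : Type*} [NormedAddCommGroup α] {Q : ℕ} (f g : Fin Q → α) : ℝ :=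
  ⨅ σ : Equiv.Perm (Fin Q), Real.sqrt (∑ l, ‖f l - g (σ l)‖ ^ 2)

/-- The metric `𝒢` on `𝒜_Q(α)`; it is computed on (arbitrary) representatives, which is
well posed since `Gfun` is invariant under permutations of either argument. -/
def Gdist {α : Type*} [NormedAddCommGroup α] {Q : ℕ} (T₁ T₂ : AQ α Q) : ℝ :=
  Gfun T₁.out T₂.out

/-- The multiplicity `Θ_T(v)` of the value `v` in the `Q`-point `T`. -/
def Theta {α : Type*} {Q : ℕ} (T : AQ α Q) (v : α) : ℕ :=
  {l : Fin Q | T.out l = v}.ncard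

/-- The support `spt(T) = {v_1, …, v_Q}` of a `Q`-point. -/
def AQspt {α : Type*} {Q : ℕ} (T : AQ α Q) : Set α := Set.range T.out

/-- The center of mass `η(T) := Q⁻¹ ∑_l v_l` of a `Q`-point. -/
def AQeta {α : Type*} [AddCommGroup α] [Module ℝ α] {Q : ℕ} (T : AQ α Q) : α :=
  (Q : ℝ)⁻¹ • ∑ l, T.out l

/-- `ℝ^{m+n} = ℝ^m × ℝ^n` with the Euclidean (L²) norm. -/
abbrev EucP (m n : ℕ) : Type := WithLp 2 (Euc m × Euc n)

/-- The point of `ℝ^{m+n}` with horizontal part `x` and vertical part `y`. -/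
def mkP {m n : ℕ} (x : Euc m) (y : Euc n) : EucP m n :=
  (WithLp.equiv 2 (Euc m × Euc n)).symm (x, y)

/-- Orthogonal projection `p_{π₀}` of `ℝ^{m+n}` onto `ℝ^m × {0} ≃ ℝ^m`. -/
def projH {m n : ℕ} (ξ : EucP m n) : Euc m := (WithLp.equiv 2 (Euc m × Euc n) ξ).1

/-- Orthogonal projection `p_{π₀^⊥}` of `ℝ^{m+n}` onto `{0} × ℝ^n ≃ ℝ^n`. -/
def projV {m n : ℕ} (ξ : EucP m n) : Euc n := (WithLp.equiv 2 (Euc m × Euc n) ξ).2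

/-- The linear map `τ ↦ (τ, A τ)`, whose range is the tangent plane of a graph. -/
def graphMap {m n : ℕ} (A : Euc m →L[ℝ] Euc n) : Euc m →ₗ[ℝ] EucP m n :=
  (WithLp.linearEquiv 2 ℝ (Euc m × Euc n)).symm.toLinearMap.comp
    ((LinearMap.id : Euc m →ₗ[ℝ] Euc m).prod (A : Euc m →ₗ[ℝ] Euc n))

/-- The graph parametrization `Φ(x) := (x, φ(x))`. -/
def Phi {m n : ℕ} (φ : Euc m → Euc n) (x : Euc m) : EucP m n := mkP x (φ x)

/-- The tangent space `T_{Φ(x)} Gr(φ) = {(τ, Dφ(x)·τ) : τ ∈ ℝ^m}` of the graph of `φ`. -/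
def tangentSpace {m n : ℕ} (φ : Euc m → Euc n) (x : Euc m) : Submodule ℝ (EucP m n) :=
  LinearMap.range (graphMap (fderiv ℝ φ x))

/-- `v ∈ κ_{Φ(x)}`: `v` is orthogonal to the tangent space of the graph of `φ` at `Φ(x)`. -/
def IsNormalAt {m n : ℕ} (φ : Euc m → Euc n) (x : Euc m) (v : EucP m n) : Prop :=
  v ∈ (tangentSpace φ x)ᗮ

/-- The multiplicity function `M(ξ) := Θ_{f(p_{π₀}(ξ))}(p_{π₀^⊥}(ξ))` of the multisection
associated to the `Q`-valued function `f`. -/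
def Mmap {m n Q : ℕ} (f : Euc m → AQ (Euc n) Q) (ξ : EucP m n) : ℕ :=
  Theta (f (projH ξ)) (projV ξ)

/-- Hypothesis (H): `φ` is `C³` on `B_s`, `f` is `L`-Lipschitz on `B_r` (w.r.t. `𝒢`), and
`‖φ‖_{C²} + Lip(f) ≤ c₀`, `‖φ‖_{C⁰} + ‖f‖_{C⁰} ≤ c₀ s`. -/
def HypH {m n Q : ℕ} (s r c₀ L : ℝ) (φ : Euc m → Euc n) (f : Euc m → AQ (Euc n) Q) : Prop :=
  0 ≤ L ∧ ContDiffOn ℝ 3 φ (ball (0 : Euc m) s) ∧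
  (∀ x ∈ ball (0 : Euc m) r, ∀ y ∈ ball (0 : Euc m) r, Gdist (f x) (f y) ≤ L * dist x y) ∧
  (∀ x ∈ ball (0 : Euc m) s,
    ‖φ x‖ + ‖fderiv ℝ φ x‖ + ‖fderiv ℝ (fderiv ℝ φ) x‖ + L ≤ c₀) ∧
  (∀ x ∈ ball (0 : Euc m) s, ∀ y ∈ ball (0 : Euc m) r,
    ‖φ x‖ + Gdist (f y) (AQmk (fun _ => (0 : Euc n))) ≤ c₀ * s)

/-- `T = N(Φ(x))`: `T` is the `Q`-point of `ℝ^{m+n}` whose multiplicity at each `v` equals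
`M(Φ(x)+v)` when `v` is a normal vector to the graph of `φ` at `Φ(x)` with `|v| < c₀`, and
vanishes otherwise.  This characterizes the reparametrizing normal vector field `N`. -/
def IsNField {m n Q : ℕ} (c₀ : ℝ) (φ : Euc m → Euc n) (f : Euc m → AQ (Euc n) Q)
    (x : Euc m) (T : AQ (EucP m n) Q) : Prop :=
  ∀ v : EucP m n, Theta T v =
    if IsNormalAt φ x v ∧ ‖v‖ < c₀ then Mmap f (Phi φ x + v) else 0

/-- The set `M_p` (for `p = Φ(x)`) of the points `p + v`, `v ∈ κ_p`, `|v| < c₀`, of the fiber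
of the tubular neighborhood over `p` carrying positive multiplicity. -/
def MsetAt {m n Q : ℕ} (c₀ : ℝ) (φ : Euc m → Euc n) (f : Euc m → AQ (Euc n) Q)
    (x : Euc m) : Set (EucP m n) :=
  {ξ | ∃ v : EucP m n, IsNormalAt φ x v ∧ ‖v‖ < c₀ ∧ ξ = Phi φ x + v ∧ 0 < Mmap f ξ}


section RepHelpers

variable {α : Type*} [NormedAddCommGroup α] {Q : ℕ}

lemma Gfun_nonneg (f g : Fin Q → α) : 0 ≤ Gfun f g :=
  Real.iInf_nonneg fun _ => Real.sqrt_nonneg _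

lemma Gfun_le (f g : Fin Q → α) (σ : Equiv.Perm (Fin Q)) :
    Gfun f g ≤ Real.sqrt (∑ l, ‖f l - g (σ l)‖ ^ 2) := by
  refine ciInf_le ⟨0, ?_⟩ σ
  rintro xx ⟨σ', rfl⟩
  exact Real.sqrt_nonneg _

lemma exists_close (f g : Fin Q → α) (l : Fin Q) : ∃ k, ‖f l - g k‖ ≤ Gfun f g := by
  obtain ⟨σ₀, hσ₀⟩ := Finite.exists_min
    (fun σ : Equiv.Perm (Fin Q) => Real.sqrt (∑ j, ‖f j - g (σ j)‖ ^ 2))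
  refine ⟨σ₀ l, le_trans ?_ (le_ciInf hσ₀)⟩
  have h1 : ‖f l - g (σ₀ l)‖ ^ 2 ≤ ∑ j, ‖f j - g (σ₀ j)‖ ^ 2 :=
    Finset.single_le_sum (f := fun j => ‖f j - g (σ₀ j)‖ ^ 2)
      (fun j _ => sq_nonneg _) (Finset.mem_univ l)
  calc ‖f l - g (σ₀ l)‖ = Real.sqrt (‖f l - g (σ₀ l)‖ ^ 2) :=
        (Real.sqrt_sq (norm_nonneg _)).symm
    _ ≤ _ := Real.sqrt_le_sqrt h1

lemma out_mk_const {β : Type*} (v : β) (k : Fin Q) :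
    (AQmk (Q := Q) (fun _ => v)).out k = v := by
  obtain ⟨σ, hσ⟩ := Quotient.mk_out (s := QPerm β Q) (fun _ => v)
  exact congrFun hσ k

lemma norm_le_Gdist_const (T : AQ α Q) (v : α) (k : Fin Q) :
    ‖T.out k - v‖ ≤ Gdist T (AQmk fun _ => v) := by
  obtain ⟨j, hj⟩ := exists_close T.out (AQmk (Q := Q) fun _ => v).out k
  rwa [out_mk_const] at hj

lemma Gdist_mk_const_le (T : AQ α Q) (v : α) (C : ℝ) (hC : 0 ≤ C)
    (h : ∀ l, ‖T.out l - v‖ ^ 2 ≤ C ^ 2) :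
    Gdist T (AQmk fun _ => v) ≤ Real.sqrt Q * C := by
  refine le_trans (Gfun_le _ _ (Equiv.refl _)) ?_
  have hsum : ∑ l, ‖T.out l - (AQmk (Q := Q) fun _ => v).out l‖ ^ 2 ≤ (Q : ℝ) * C ^ 2 := by
    calc ∑ l, ‖T.out l - (AQmk (Q := Q) fun _ => v).out l‖ ^ 2
        = ∑ l : Fin Q, ‖T.out l - v‖ ^ 2 := by
          refine Finset.sum_congr rfl fun l _ => by rw [out_mk_const]
      _ ≤ ∑ _l : Fin Q, C ^ 2 := Finset.sum_le_sum fun l _ => h l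
      _ = (Q : ℝ) * C ^ 2 := by simp [Finset.sum_const, mul_comm]
  calc Real.sqrt (∑ l, ‖T.out l - (AQmk (Q := Q) fun _ => v).out (Equiv.refl _ l)‖ ^ 2)
      ≤ Real.sqrt ((Q : ℝ) * C ^ 2) := Real.sqrt_le_sqrt hsum
    _ = Real.sqrt Q * C := by
        rw [Real.sqrt_mul (Nat.cast_nonneg _), Real.sqrt_sq hC]

lemma theta_pos_iff {β : Type*} (T : AQ β Q) (v : β) :
    0 < Theta T v ↔ ∃ l, T.out l = v := by
  unfold Theta
  rw [Set.ncard_pos (Set.toFinite _)]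
  exact Iff.rfl

lemma projH_add {m n : ℕ} (a b : EucP m n) : projH (a + b) = projH a + projH b := rfl

lemma projV_add {m n : ℕ} (a b : EucP m n) : projV (a + b) = projV a + projV b := rfl

lemma projH_sub {m n : ℕ} (a b : EucP m n) : projH (a - b) = projH a - projH b := rfl

lemma projV_sub {m n : ℕ} (a b : EucP m n) : projV (a - b) = projV a - projV b := rfl

lemma norm_sq_proj {m n : ℕ} (ξ : EucP m n) :
    ‖ξ‖ ^ 2 = ‖projH ξ‖ ^ 2 + ‖projV ξ‖ ^ 2 :=
  WithLp.prod_norm_sq_eq_of_L2 ξ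

lemma norm_projH_le {m n : ℕ} (ξ : EucP m n) : ‖projH ξ‖ ≤ ‖ξ‖ := by
  have h := norm_sq_proj ξ
  nlinarith [norm_nonneg (projH ξ), norm_nonneg ξ, sq_nonneg ‖projV ξ‖]

lemma normal_horiz_le {m n : ℕ} (φ : Euc m → Euc n) (y : Euc m) (v : EucP m n)
    (hv : IsNormalAt φ y v) :
    ‖projH v‖ ≤ ‖fderiv ℝ φ y‖ * ‖projV v‖ := by
  set A := fderiv ℝ φ y with hA
  have horth : (inner ℝ (graphMap A (projH v)) v : ℝ) = 0 :=
    (Submodule.mem_orthogonal _ v).mp hv (graphMap A (projH v)) ⟨projH v, rfl⟩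
  have hexp : (inner ℝ (graphMap A (projH v)) v : ℝ)
      = ‖projH v‖ ^ 2 + inner ℝ (A (projH v)) (projV v) := by
    rw [WithLp.prod_inner_apply]
    show (inner ℝ (projH v) (projH v) : ℝ) + inner ℝ (A (projH v)) (projV v)
      = ‖projH v‖ ^ 2 + inner ℝ (A (projH v)) (projV v)
    rw [real_inner_self_eq_norm_sq]
  have hkey : ‖projH v‖ ^ 2 ≤ ‖A‖ * ‖projV v‖ * ‖projH v‖ := by
    have : ‖projH v‖ ^ 2 = - inner ℝ (A (projH v)) (projV v) := by
      rw [hexp] at horth; linarith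
    calc ‖projH v‖ ^ 2 = inner ℝ (A (projH v)) (-(projV v)) := by
          rw [inner_neg_right]; linarith [this]
      _ ≤ ‖A (projH v)‖ * ‖-(projV v)‖ := real_inner_le_norm _ _
      _ = ‖A (projH v)‖ * ‖projV v‖ := by rw [norm_neg]
      _ ≤ (‖A‖ * ‖projH v‖) * ‖projV v‖ :=
          mul_le_mul_of_nonneg_right (A.le_opNorm _) (norm_nonneg _)
      _ = ‖A‖ * ‖projV v‖ * ‖projH v‖ := by ring
  rcases eq_or_lt_of_le (norm_nonneg (projH v)) with h0 | h0
  · rw [← h0]; positivity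
  · have := le_of_mul_le_mul_right (by nlinarith : ‖projH v‖ * ‖projH v‖ ≤ (‖A‖ * ‖projV v‖) * ‖projH v‖) h0
    exact this

end RepHelpers


set_option maxHeartbeats 2000000

/-- **Reparametrization: estimate at the averaged point.** There is `c₀ > 0`
(depending on `m, n, Q, r-s, r/s`, equivalently on `m, n, Q, s, r`) such that, under
hypothesis (H), the well-defined normal field `N` satisfies: if `x ∈ B_s` and
`(x, η(f(x))) = p + v` with `p = Φ(y) ∈ Σ` and `v ∈ κ_p`, then
`𝒢(N(p), Q⟦v⟧) ≤ 2√Q · 𝒢(f(x), Q⟦η(f(x))⟧)`. -/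


theorem reparametrization_estimate_at_averaged_point
    (m n Q : ℕ) (hm : 0 < m) (hn : 0 < n) (hQ : 0 < Q)
    (s r : ℝ) (hs : 0 < s) (hsr : s < r) (hr : r < 1) :
    ∃ c₀ : ℝ, 0 < c₀ ∧
      ∀ (φ : Euc m → Euc n) (f : Euc m → AQ (Euc n) Q) (L : ℝ),
        HypH s r c₀ L φ f →
        ∀ N : Euc m → AQ (EucP m n) Q,
          (∀ x ∈ ball (0 : Euc m) s, IsNField c₀ φ f x (N x)) →
          ∀ x ∈ ball (0 : Euc m) s, ∀ y ∈ ball (0 : Euc m) s, ∀ v : EucP m n,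
            IsNormalAt φ y v →
            mkP x (AQeta (f x)) = Phi φ y + v →
            Gdist (N y) (AQmk (fun _ => v))
              ≤ 2 * Real.sqrt Q * Gdist (f x) (AQmk (fun _ => AQeta (f x))) := by
  classical
  set c₀ : ℝ := min (1/4 : ℝ) (r - s) with hc₀def
  have hc₀pos : 0 < c₀ := lt_min (by norm_num) (by linarith)
  have hc₀le : c₀ ≤ 1/4 := min_le_left _ _
  have hc₀rs : c₀ ≤ r - s := min_le_right _ _
  refine ⟨c₀, hc₀pos, ?_⟩
  intro φ f L hH N hNf x hx y hy v hvnorm heq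
  obtain ⟨hL, hφC3, hlip, hbound, hC0⟩ := hH
  -- basic consequences of the hypothesis
  have hDφ : ‖fderiv ℝ φ y‖ ≤ c₀ := by
    have := hbound y hy
    have h1 := norm_nonneg (φ y)
    have h2 := norm_nonneg (fderiv ℝ (fderiv ℝ φ) y)
    linarith
  have hLc : L ≤ c₀ := by
    have := hbound y hy
    have h1 := norm_nonneg (φ y)
    have h2 := norm_nonneg (fderiv ℝ φ y)
    have h3 := norm_nonneg (fderiv ℝ (fderiv ℝ φ) y)
    linarith
  set η : Euc n := AQeta (f x) with hηdef
  set G : ℝ := Gdist (f x) (AQmk fun _ => η) with hGdef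
  have hG0 : 0 ≤ G := Gfun_nonneg _ _
  -- decompose the defining equation
  have hxeq : x = y + projH v := congrArg projH heq
  have hηeq : η = φ y + projV v := congrArg projV heq
  -- x ∈ ball 0 r
  have hxr : x ∈ Metric.ball (0 : Euc m) r := by
    rcases Metric.mem_ball.mp hx with h
    exact Metric.mem_ball.mpr (lt_trans h hsr)
  -- the key pointwise estimate
  have key : ∀ l : Fin Q, ‖(N y).out l - v‖ ^ 2 ≤ (Real.sqrt 2 * G) ^ 2 := by
    intro l
    set w : EucP m n := (N y).out l with hwdef
    have hθ : 0 < Theta (N y) w := (theta_pos_iff _ _).mpr ⟨l, rfl⟩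
    have hite := hNf y hy w
    by_cases hcond : IsNormalAt φ y w ∧ ‖w‖ < c₀
    swap
    · rw [hite, if_neg hcond] at hθ; exact absurd hθ (lt_irrefl 0)
    obtain ⟨hwnorm, hwlt⟩ := hcond
    rw [hite, if_pos ⟨hwnorm, hwlt⟩] at hθ
    -- positive multiplicity at ξ = Φ(y) + w
    set xl : Euc m := y + projH w with hxldef
    set ul : Euc n := φ y + projV w with huldef
    have hprojH : projH (Phi φ y + w) = xl := rfl
    have hprojV : projV (Phi φ y + w) = ul := rfl
    have hθ' : 0 < Theta (f xl) ul := by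
      unfold Mmap at hθ
      rwa [hprojH, hprojV] at hθ
    obtain ⟨k, hk⟩ := (theta_pos_iff _ _).mp hθ'
    -- xl ∈ ball 0 r
    have hxlr : xl ∈ Metric.ball (0 : Euc m) r := by
      rw [Metric.mem_ball, dist_zero_right]
      have h1 : ‖xl‖ ≤ ‖y‖ + ‖projH w‖ := norm_add_le _ _
      have h2 : ‖projH w‖ ≤ ‖w‖ := norm_projH_le w
      have h3 : ‖y‖ < s := by rw [Metric.mem_ball, dist_zero_right] at hy; exact hy
      linarith
    -- the difference h = w - v is normal at y
    have hdiffnorm : IsNormalAt φ y (w - v) := Submodule.sub_mem _ hwnorm hvnorm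
    have hslope : ‖projH (w - v)‖ ≤ c₀ * ‖projV (w - v)‖ := by
      refine le_trans (normal_horiz_le φ y _ hdiffnorm) ?_
      exact mul_le_mul_of_nonneg_right hDφ (norm_nonneg _)
    have hHpart : projH (w - v) = xl - x := by
      rw [projH_sub, hxeq, hxldef]; abel
    have hVpart : projV (w - v) = ul - η := by
      rw [projV_sub, hηeq, huldef]; abel
    set a : ℝ := ‖ul - η‖ with hadef
    have ha0 : 0 ≤ a := norm_nonneg _
    -- Lipschitz transfer
    have hGlip : Gdist (f xl) (f x) ≤ L * dist xl x := hlip xl hxlr x hxr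
    obtain ⟨k', hk'⟩ := exists_close ((f xl).out) ((f x).out) k
    rw [hk] at hk'
    have hk'2 : ‖(f x).out k' - η‖ ≤ G := norm_le_Gdist_const (f x) η k'
    have hdistxl : dist xl x = ‖projH (w - v)‖ := by
      rw [dist_eq_norm, hHpart]
    have hchain : a ≤ c₀ * (c₀ * a) + G := by
      have h1 : a ≤ ‖ul - (f x).out k'‖ + ‖(f x).out k' - η‖ := by
        have := norm_sub_le_norm_sub_add_norm_sub ul ((f x).out k') η
        exact this
      have h2 : ‖ul - (f x).out k'‖ ≤ L * dist xl x := le_trans hk' hGlip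
      have h3 : L * dist xl x ≤ c₀ * (c₀ * a) := by
        rw [hdistxl]
        have h4 : ‖projH (w - v)‖ ≤ c₀ * a := by
          rw [hadef, ← hVpart]; exact hslope
        have hpn : 0 ≤ ‖projH (w - v)‖ := norm_nonneg _
        have hLpos : 0 ≤ L := hL
        nlinarith
      linarith
    have hcc : c₀ * c₀ ≤ 1/16 := by nlinarith
    have hac : a ≤ (16/15) * G := by nlinarith [mul_nonneg (mul_nonneg hc₀pos.le hc₀pos.le) ha0, sq_nonneg a]
    -- conclude
    have hfinal : ‖w - v‖ ^ 2 ≤ 2 * G ^ 2 := by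
      have hns := norm_sq_proj (w - v)
      rw [hHpart, hVpart, ← hadef] at hns
      have hH2 : ‖xl - x‖ ≤ c₀ * a := by
        rw [hadef, ← hVpart, ← hHpart]; exact hslope
      have hxx0 : 0 ≤ ‖xl - x‖ := norm_nonneg _
      have hq1 : ‖xl - x‖ ^ 2 ≤ (c₀ * a) ^ 2 := by nlinarith
      have hq2 : (c₀ * a) ^ 2 ≤ (1/16) * a ^ 2 := by nlinarith [sq_nonneg a]
      have hq3 : a ^ 2 ≤ (16/15) ^ 2 * G ^ 2 := by nlinarith
      nlinarith
    calc ‖w - v‖ ^ 2 ≤ 2 * G ^ 2 := hfinal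
      _ = (Real.sqrt 2 * G) ^ 2 := by
          rw [mul_pow, Real.sq_sqrt (by norm_num : (0:ℝ) ≤ 2)]
  -- assemble
  have hmain : Gdist (N y) (AQmk fun _ => v) ≤ Real.sqrt Q * (Real.sqrt 2 * G) :=
    Gdist_mk_const_le (N y) v _ (by positivity) key
  refine le_trans hmain ?_
  have hs2 : Real.sqrt 2 ≤ 2 := by
    nlinarith [Real.sq_sqrt (by norm_num : (0:ℝ) ≤ 2), Real.sqrt_nonneg 2]
  have hq0 : 0 ≤ Real.sqrt Q := Real.sqrt_nonneg _
  calc Real.sqrt Q * (Real.sqrt 2 * G) = Real.sqrt 2 * (Real.sqrt Q * G) := by ring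
    _ ≤ 2 * (Real.sqrt Q * G) := by
        apply mul_le_mul_of_nonneg_right hs2; positivity
    _ = 2 * Real.sqrt Q * G := by ring
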